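/- Fix τ ∈ (0,1). The left limit of f at y*_τ equals y*_τ: f(y*_τ^−) := lim_{δ ↓ 0} f(y*_τ − δ) = y*_τ. -/

import Mathlib

open MeasureTheory ProbabilityTheory Filter Set
set_option linter.unusedSectionVars false
set_option linter.unusedVariables false

noncomputable section

/-- sign function: `1` if `0 ≤ x`, `−1` otherwise. -/
def sgn (x : ℝ) : ℝ := if 0 ≤ x then 1 else -1

/-- `pr^π(Y ≤ y)`, the CDF of the outcome induced by the regime `(π₁, π₂)`:
`∫∫ F_ε(y − m(h₂) − π₂(h₂) c(h₂)) κ((h₁, π₁(h₁)), dh₂) μ(dh₁)`. -/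
def prPi {X1 X2 : Type*} [MeasurableSpace X1] [MeasurableSpace X2]
    (μ : Measure X1) (κ : Kernel (X1 × ℝ) X2) (m c : X2 → ℝ) (Feps : ℝ → ℝ)
    (π₁ : X1 → ℝ) (π₂ : X2 → ℝ) (y : ℝ) : ℝ :=
  ∫ h₁, (∫ h₂, Feps (y - m h₂ - π₂ h₂ * c h₂) ∂(κ (h₁, π₁ h₁))) ∂μ

/-- `I(y, F, G) = ∫ F(y − u − |v|) dG(u,v)`. -/
def Ifun (y : ℝ) (F : ℝ → ℝ) (G : Measure (ℝ × ℝ)) : ℝ :=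
  ∫ p, F (y - p.1 - |p.2|) ∂G

/-- `G(·,· | h₁, a₁)`: the pushforward of `κ((h₁,a₁),·)` under `h₂ ↦ (m h₂, c h₂)`. -/
def Gdist {X1 X2 : Type*} [MeasurableSpace X1] [MeasurableSpace X2]
    (κ : Kernel (X1 × ℝ) X2) (m c : X2 → ℝ) (h₁ : X1) (a₁ : ℝ) : Measure (ℝ × ℝ) :=
  (κ (h₁, a₁)).map (fun h₂ => (m h₂, c h₂))

/-- `d(h₁, y) = I(y, F_ε, G(·,·|h₁,−1)) − I(y, F_ε, G(·,·|h₁,1))`. -/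
def dfun {X1 X2 : Type*} [MeasurableSpace X1] [MeasurableSpace X2]
    (κ : Kernel (X1 × ℝ) X2) (m c : X2 → ℝ) (Feps : ℝ → ℝ) (h₁ : X1) (y : ℝ) : ℝ :=
  Ifun y Feps (Gdist κ m c h₁ (-1)) - Ifun y Feps (Gdist κ m c h₁ 1)

/-- `Γ(h₁, y) = sgn(d(h₁, y))`. -/
def Gam {X1 X2 : Type*} [MeasurableSpace X1] [MeasurableSpace X2]
    (κ : Kernel (X1 × ℝ) X2) (m c : X2 → ℝ) (Feps : ℝ → ℝ) (h₁ : X1) (y : ℝ) : ℝ :=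
  sgn (dfun κ m c Feps h₁ y)

/-- `q^π(τ) = inf{y : pr^π(Y ≤ y) ≥ τ}`. -/
def quant {X1 X2 : Type*} [MeasurableSpace X1] [MeasurableSpace X2]
    (μ : Measure X1) (κ : Kernel (X1 × ℝ) X2) (m c : X2 → ℝ) (Feps : ℝ → ℝ)
    (τ : ℝ) (π₁ : X1 → ℝ) (π₂ : X2 → ℝ) : ℝ :=
  sInf {y : ℝ | τ ≤ prPi μ κ m c Feps π₁ π₂ y}

/-- `y*_τ = inf{y : pr^{(Γ(·,y), π₂*)}(Y ≤ y) ≥ τ}` where `π₂*(h₂) = sgn(c(h₂))`. -/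
def ystar {X1 X2 : Type*} [MeasurableSpace X1] [MeasurableSpace X2]
    (μ : Measure X1) (κ : Kernel (X1 × ℝ) X2) (m c : X2 → ℝ) (Feps : ℝ → ℝ)
    (τ : ℝ) : ℝ :=
  sInf {y : ℝ |
    τ ≤ prPi μ κ m c Feps (fun h₁ => Gam κ m c Feps h₁ y) (fun h₂ => sgn (c h₂)) y}

/-- `f(y) = q^{(Γ(·,y), π₂*)}(τ)`. -/
def fQIQ {X1 X2 : Type*} [MeasurableSpace X1] [MeasurableSpace X2]
    (μ : Measure X1) (κ : Kernel (X1 × ℝ) X2) (m c : X2 → ℝ) (Feps : ℝ → ℝ)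
    (τ : ℝ) (y : ℝ) : ℝ :=
  quant μ κ m c Feps τ (fun h₁ => Gam κ m c Feps h₁ y) (fun h₂ => sgn (c h₂))

namespace Stmt10Aux

variable {X1 X2 : Type*} [MeasurableSpace X1] [MeasurableSpace X2]
variable (κ : Kernel (X1 × ℝ) X2) (m c : X2 → ℝ) (Feps : ℝ → ℝ)

/-- inner CDF-type integral for action `a`. -/
def J (h₁ : X1) (a y : ℝ) : ℝ := ∫ h₂, Feps (y - m h₂ - |c h₂|) ∂(κ (h₁, a))

/-- the minimized CDF `g(y) = ∫ min(J(h₁,1,y), J(h₁,-1,y)) dμ`. -/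
def gmin (μ : Measure X1) (y : ℝ) : ℝ :=
  ∫ h₁, min (J κ m c Feps h₁ 1 y) (J κ m c Feps h₁ (-1) y) ∂μ

/-- the CDF of the regime `(Γ(·,y), π₂*)` evaluated at `z`. -/
def Pfun (μ : Measure X1) (y z : ℝ) : ℝ :=
  ∫ h₁, J κ m c Feps h₁ (Gam κ m c Feps h₁ y) z ∂μ


lemma norm_Feps_le (hF_mem : ∀ x : ℝ, Feps x ∈ Icc (0:ℝ) 1) (x : ℝ) : ‖Feps x‖ ≤ 1 := by
  rw [Real.norm_eq_abs, abs_le]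
  exact ⟨le_trans (by norm_num) (hF_mem x).1, (hF_mem x).2⟩

lemma meas_inner (hm : Measurable m) (hc : Measurable c) (hF_mono : Monotone Feps) (y : ℝ) :
    Measurable fun h₂ => Feps (y - m h₂ - |c h₂|) :=
  hF_mono.measurable.comp ((measurable_const.sub hm).sub hc.abs)

lemma integrable_inner [IsMarkovKernel κ] (hm : Measurable m) (hc : Measurable c)
    (hF_mono : Monotone Feps) (hF_mem : ∀ x : ℝ, Feps x ∈ Icc (0:ℝ) 1)
    (h₁ : X1) (a y : ℝ) :
    Integrable (fun h₂ => Feps (y - m h₂ - |c h₂|)) (κ (h₁, a)) :=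
  (integrable_const 1).mono' (meas_inner m c Feps hm hc hF_mono y).aestronglyMeasurable
    (ae_of_all _ fun _ => norm_Feps_le Feps hF_mem _)

variable [IsMarkovKernel κ]
variable {m c Feps}

section

variable (hm : Measurable m) (hc : Measurable c) (hF_mono : Monotone Feps)
  (hF_mem : ∀ x : ℝ, Feps x ∈ Icc (0:ℝ) 1)
include hm hc hF_mono hF_mem

lemma J_nonneg (h₁ : X1) (a y : ℝ) : 0 ≤ J κ m c Feps h₁ a y :=
  integral_nonneg fun h₂ => (hF_mem _).1

lemma J_le_one (h₁ : X1) (a y : ℝ) : J κ m c Feps h₁ a y ≤ 1 := by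
  have h := integral_mono (integrable_inner κ m c Feps hm hc hF_mono hF_mem h₁ a y)
    (integrable_const 1) (fun h₂ => (hF_mem _).2)
  simpa [J] using h

lemma norm_J_le (h₁ : X1) (a y : ℝ) : ‖J κ m c Feps h₁ a y‖ ≤ 1 := by
  rw [Real.norm_eq_abs, abs_le]
  exact ⟨le_trans (by norm_num) (J_nonneg κ hm hc hF_mono hF_mem h₁ a y),
    J_le_one κ hm hc hF_mono hF_mem h₁ a y⟩

lemma J_mono (h₁ : X1) (a : ℝ) : Monotone (J κ m c Feps h₁ a) := by
  intro y y' hyy'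
  exact integral_mono (integrable_inner κ m c Feps hm hc hF_mono hF_mem h₁ a y)
    (integrable_inner κ m c Feps hm hc hF_mono hF_mem h₁ a y')
    (fun h₂ => hF_mono (by linarith))

lemma J_meas (a y : ℝ) : Measurable fun h₁ => J κ m c Feps h₁ a y := by
  have h1 : StronglyMeasurable fun q : (X1 × ℝ) × X2 => Feps (y - m q.2 - |c q.2|) :=
    ((meas_inner m c Feps hm hc hF_mono y).comp measurable_snd).stronglyMeasurable
  have h2 : StronglyMeasurable fun p : X1 × ℝ => ∫ h₂, Feps (y - m h₂ - |c h₂|) ∂(κ p) :=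
    h1.integral_kernel_prod_right'
  exact (h2.measurable.comp (measurable_id.prodMk measurable_const))

lemma Ifun_eq (h₁ : X1) (a y : ℝ) : Ifun y Feps (Gdist κ m c h₁ a) = J κ m c Feps h₁ a y := by
  have hg : Measurable fun p : ℝ × ℝ => Feps (y - p.1 - |p.2|) :=
    hF_mono.measurable.comp ((measurable_const.sub measurable_fst).sub measurable_snd.abs)
  rw [Ifun, Gdist, integral_map (hm.prodMk hc).aemeasurable hg.aestronglyMeasurable]
  rfl

lemma dfun_eq (h₁ : X1) (y : ℝ) :
    dfun κ m c Feps h₁ y = J κ m c Feps h₁ (-1) y - J κ m c Feps h₁ 1 y := by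
  rw [dfun, Ifun_eq κ hm hc hF_mono hF_mem, Ifun_eq κ hm hc hF_mono hF_mem]

lemma J_Gam (h₁ : X1) (y z : ℝ) :
    J κ m c Feps h₁ (Gam κ m c Feps h₁ y) z =
      if 0 ≤ dfun κ m c Feps h₁ y then J κ m c Feps h₁ 1 z else J κ m c Feps h₁ (-1) z := by
  rw [Gam, sgn]; split_ifs <;> rfl

lemma J_Gam_self (h₁ : X1) (y : ℝ) :
    J κ m c Feps h₁ (Gam κ m c Feps h₁ y) y =
      min (J κ m c Feps h₁ 1 y) (J κ m c Feps h₁ (-1) y) := by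
  rw [J_Gam κ hm hc hF_mono hF_mem]
  have hd := dfun_eq κ hm hc hF_mono hF_mem (Feps := Feps) h₁ y
  split_ifs with h
  · rw [hd] at h
    exact (min_eq_left (by linarith)).symm
  · rw [hd] at h
    exact (min_eq_right (by linarith)).symm

lemma min_le_J_Gam (h₁ : X1) (y z : ℝ) :
    min (J κ m c Feps h₁ 1 z) (J κ m c Feps h₁ (-1) z) ≤
      J κ m c Feps h₁ (Gam κ m c Feps h₁ y) z := by
  rw [J_Gam κ hm hc hF_mono hF_mem]
  split_ifs
  · exact min_le_left _ _
  · exact min_le_right _ _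

end

section

variable (hm : Measurable m) (hc : Measurable c) (hF_mono : Monotone Feps)
  (hF_mem : ∀ x : ℝ, Feps x ∈ Icc (0:ℝ) 1)
include hm hc hF_mono hF_mem

lemma J_tendsto_within (hF_rc : ∀ x : ℝ, ContinuousWithinAt Feps (Ici x) x)
    (h₁ : X1) (a x : ℝ) :
    Tendsto (fun y => J κ m c Feps h₁ a y) (nhdsWithin x (Ici x))
      (nhds (J κ m c Feps h₁ a x)) := by
  apply tendsto_integral_filter_of_dominated_convergence (fun _ => (1:ℝ))
  · exact Eventually.of_forall fun y =>
      (meas_inner m c Feps hm hc hF_mono y).aestronglyMeasurable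
  · exact Eventually.of_forall fun y => ae_of_all _ fun h₂ => norm_Feps_le Feps hF_mem _
  · exact integrable_const 1
  · refine ae_of_all _ fun h₂ => ?_
    have ht : Tendsto (fun y : ℝ => y - m h₂ - |c h₂|) (nhdsWithin x (Ici x))
        (nhdsWithin (x - m h₂ - |c h₂|) (Ici (x - m h₂ - |c h₂|))) := by
      apply Filter.Tendsto.inf
      · exact ((continuous_id.sub continuous_const).sub continuous_const).tendsto x
      · exact tendsto_principal_principal.2 fun y hy => by
          simp only [mem_Ici] at *; linarith
    exact (hF_rc _).tendsto.comp ht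

lemma J_tendsto_atTop (hF_top : Tendsto Feps atTop (nhds 1)) (h₁ : X1) (a : ℝ) :
    Tendsto (fun y => J κ m c Feps h₁ a y) atTop (nhds 1) := by
  have h := tendsto_integral_filter_of_dominated_convergence (μ := κ (h₁, a))
    (F := fun y h₂ => Feps (y - m h₂ - |c h₂|)) (f := fun _ => (1:ℝ)) (fun _ => (1:ℝ))
    (Eventually.of_forall fun y =>
      (meas_inner m c Feps hm hc hF_mono y).aestronglyMeasurable)
    (Eventually.of_forall fun y => ae_of_all _ fun h₂ => norm_Feps_le Feps hF_mem _)
    (integrable_const 1)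
    (ae_of_all _ fun h₂ => by
      have ht : Tendsto (fun y : ℝ => y - m h₂ - |c h₂|) atTop atTop := by
        simp only [sub_sub]
        exact tendsto_atTop_add_const_right atTop _ tendsto_id
      exact hF_top.comp ht)
  simpa [J] using h

lemma J_tendsto_atBot (hF_bot : Tendsto Feps atBot (nhds 0)) (h₁ : X1) (a : ℝ) :
    Tendsto (fun y => J κ m c Feps h₁ a y) atBot (nhds 0) := by
  have h := tendsto_integral_filter_of_dominated_convergence (μ := κ (h₁, a))
    (F := fun y h₂ => Feps (y - m h₂ - |c h₂|)) (f := fun _ => (0:ℝ)) (fun _ => (1:ℝ))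
    (Eventually.of_forall fun y =>
      (meas_inner m c Feps hm hc hF_mono y).aestronglyMeasurable)
    (Eventually.of_forall fun y => ae_of_all _ fun h₂ => norm_Feps_le Feps hF_mem _)
    (integrable_const 1)
    (ae_of_all _ fun h₂ => by
      have ht : Tendsto (fun y : ℝ => y - m h₂ - |c h₂|) atBot atBot := by
        simp only [sub_sub]
        exact tendsto_atBot_add_const_right atBot _ tendsto_id
      exact hF_bot.comp ht)
  simpa [J] using h

end

section

variable (μ : Measure X1) [IsProbabilityMeasure μ]
variable (hm : Measurable m) (hc : Measurable c) (hF_mono : Monotone Feps)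
  (hF_mem : ∀ x : ℝ, Feps x ∈ Icc (0:ℝ) 1)
include hm hc hF_mono hF_mem

lemma norm_min_J_le (h₁ : X1) (y : ℝ) :
    ‖min (J κ m c Feps h₁ 1 y) (J κ m c Feps h₁ (-1) y)‖ ≤ 1 := by
  rw [Real.norm_eq_abs, abs_le]
  constructor
  · have := J_nonneg κ hm hc hF_mono hF_mem h₁ 1 y
    have := J_nonneg κ hm hc hF_mono hF_mem h₁ (-1) y
    simp only [le_min_iff]; constructor <;> linarith
  · exact le_trans (min_le_left _ _) (J_le_one κ hm hc hF_mono hF_mem h₁ 1 y)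

lemma min_J_meas (y : ℝ) :
    Measurable fun h₁ => min (J κ m c Feps h₁ 1 y) (J κ m c Feps h₁ (-1) y) :=
  (J_meas κ hm hc hF_mono hF_mem 1 y).min (J_meas κ hm hc hF_mono hF_mem (-1) y)

lemma min_J_integrable (y : ℝ) :
    Integrable (fun h₁ => min (J κ m c Feps h₁ 1 y) (J κ m c Feps h₁ (-1) y)) μ :=
  (integrable_const 1).mono'
    (min_J_meas κ hm hc hF_mono hF_mem y).aestronglyMeasurable
    (ae_of_all _ fun h₁ => norm_min_J_le κ hm hc hF_mono hF_mem h₁ y)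

lemma gmin_mono : Monotone (gmin κ m c Feps μ) := by
  intro y y' hyy'
  apply integral_mono (min_J_integrable κ μ hm hc hF_mono hF_mem y)
    (min_J_integrable κ μ hm hc hF_mono hF_mem y')
  intro h₁
  exact min_le_min (J_mono κ hm hc hF_mono hF_mem h₁ 1 hyy')
    (J_mono κ hm hc hF_mono hF_mem h₁ (-1) hyy')

lemma gmin_tendsto_within (hF_rc : ∀ x : ℝ, ContinuousWithinAt Feps (Ici x) x) (x : ℝ) :
    Tendsto (gmin κ m c Feps μ) (nhdsWithin x (Ici x))
      (nhds (gmin κ m c Feps μ x)) := by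
  apply tendsto_integral_filter_of_dominated_convergence (fun _ => (1:ℝ))
  · exact Eventually.of_forall fun y =>
      (min_J_meas κ hm hc hF_mono hF_mem y).aestronglyMeasurable
  · exact Eventually.of_forall fun y => ae_of_all _ fun h₁ =>
      norm_min_J_le κ hm hc hF_mono hF_mem h₁ y
  · exact integrable_const 1
  · exact ae_of_all _ fun h₁ =>
      (J_tendsto_within κ hm hc hF_mono hF_mem hF_rc h₁ 1 x).min
        (J_tendsto_within κ hm hc hF_mono hF_mem hF_rc h₁ (-1) x)

lemma gmin_tendsto_atTop (hF_top : Tendsto Feps atTop (nhds 1)) :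
    Tendsto (gmin κ m c Feps μ) atTop (nhds 1) := by
  have h := tendsto_integral_filter_of_dominated_convergence (μ := μ)
    (F := fun y h₁ => min (J κ m c Feps h₁ 1 y) (J κ m c Feps h₁ (-1) y))
    (f := fun _ => (1:ℝ)) (fun _ => (1:ℝ))
    (Eventually.of_forall fun y =>
      (min_J_meas κ hm hc hF_mono hF_mem y).aestronglyMeasurable)
    (Eventually.of_forall fun y => ae_of_all _ fun h₁ =>
      norm_min_J_le κ hm hc hF_mono hF_mem h₁ y)
    (integrable_const 1)
    (ae_of_all _ fun h₁ => by
      have := (J_tendsto_atTop κ hm hc hF_mono hF_mem hF_top h₁ 1).min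
        (J_tendsto_atTop κ hm hc hF_mono hF_mem hF_top h₁ (-1))
      simpa using this)
  simp at h; exact h

lemma gmin_tendsto_atBot (hF_bot : Tendsto Feps atBot (nhds 0)) :
    Tendsto (gmin κ m c Feps μ) atBot (nhds 0) := by
  have h := tendsto_integral_filter_of_dominated_convergence (μ := μ)
    (F := fun y h₁ => min (J κ m c Feps h₁ 1 y) (J κ m c Feps h₁ (-1) y))
    (f := fun _ => (0:ℝ)) (fun _ => (1:ℝ))
    (Eventually.of_forall fun y =>
      (min_J_meas κ hm hc hF_mono hF_mem y).aestronglyMeasurable)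
    (Eventually.of_forall fun y => ae_of_all _ fun h₁ =>
      norm_min_J_le κ hm hc hF_mono hF_mem h₁ y)
    (integrable_const 1)
    (ae_of_all _ fun h₁ => by
      have := (J_tendsto_atBot κ hm hc hF_mono hF_mem hF_bot h₁ 1).min
        (J_tendsto_atBot κ hm hc hF_mono hF_mem hF_bot h₁ (-1))
      simpa using this)
  simp at h; exact h

lemma dfun_meas (y : ℝ) : Measurable fun h₁ => dfun κ m c Feps h₁ y := by
  have he : (fun h₁ => dfun κ m c Feps h₁ y) =
      fun h₁ => J κ m c Feps h₁ (-1) y - J κ m c Feps h₁ 1 y :=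
    funext fun h₁ => dfun_eq κ hm hc hF_mono hF_mem h₁ y
  rw [he]
  exact (J_meas κ hm hc hF_mono hF_mem (-1) y).sub (J_meas κ hm hc hF_mono hF_mem 1 y)

lemma JGam_meas (y z : ℝ) :
    Measurable fun h₁ => J κ m c Feps h₁ (Gam κ m c Feps h₁ y) z := by
  have he : (fun h₁ => J κ m c Feps h₁ (Gam κ m c Feps h₁ y) z) =
      fun h₁ => if 0 ≤ dfun κ m c Feps h₁ y then J κ m c Feps h₁ 1 z
        else J κ m c Feps h₁ (-1) z :=
    funext fun h₁ => J_Gam κ hm hc hF_mono hF_mem h₁ y z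
  rw [he]
  exact Measurable.ite (measurableSet_le measurable_const (dfun_meas κ hm hc hF_mono hF_mem y))
    (J_meas κ hm hc hF_mono hF_mem 1 z) (J_meas κ hm hc hF_mono hF_mem (-1) z)

lemma JGam_integrable (y z : ℝ) :
    Integrable (fun h₁ => J κ m c Feps h₁ (Gam κ m c Feps h₁ y) z) μ :=
  (integrable_const 1).mono' (JGam_meas κ hm hc hF_mono hF_mem y z).aestronglyMeasurable
    (ae_of_all _ fun h₁ => norm_J_le κ hm hc hF_mono hF_mem h₁ _ z)

lemma Pfun_mono (y : ℝ) : Monotone (Pfun κ m c Feps μ y) := by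
  intro z z' hzz'
  exact integral_mono (JGam_integrable κ μ hm hc hF_mono hF_mem y z)
    (JGam_integrable κ μ hm hc hF_mono hF_mem y z')
    (fun h₁ => J_mono κ hm hc hF_mono hF_mem h₁ _ hzz')

lemma gmin_le_Pfun (y z : ℝ) : gmin κ m c Feps μ z ≤ Pfun κ m c Feps μ y z := by
  exact integral_mono (min_J_integrable κ μ hm hc hF_mono hF_mem z)
    (JGam_integrable κ μ hm hc hF_mono hF_mem y z)
    (fun h₁ => min_le_J_Gam κ hm hc hF_mono hF_mem h₁ y z)

lemma Pfun_self (y : ℝ) : Pfun κ m c Feps μ y y = gmin κ m c Feps μ y := by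
  rw [Pfun, gmin]
  exact integral_congr_ae (ae_of_all _ fun h₁ => J_Gam_self κ hm hc hF_mono hF_mem h₁ y)

end

end Stmt10Aux

/-- fix `τ ∈ (0,1)`. The left limit of `f` at `y*_τ` equals `y*_τ`:
`f(y*_τ⁻) = lim_{δ ↓ 0} f(y*_τ − δ) = y*_τ`. -/
theorem stmt10
    {X1 X2 : Type*} [MeasurableSpace X1] [MeasurableSpace X2]
    [StandardBorelSpace X1] [StandardBorelSpace X2]
    (μ : Measure X1) [IsProbabilityMeasure μ]
    (κ : Kernel (X1 × ℝ) X2) [IsMarkovKernel κ]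
    (m c : X2 → ℝ) (hm : Measurable m) (hc : Measurable c)
    (Feps : ℝ → ℝ) (hF_mono : Monotone Feps)
    (hF_rc : ∀ x : ℝ, ContinuousWithinAt Feps (Ici x) x)
    (hF_bot : Tendsto Feps atBot (nhds 0)) (hF_top : Tendsto Feps atTop (nhds 1))
    (hF_mem : ∀ x : ℝ, Feps x ∈ Icc (0:ℝ) 1)
    (τ : ℝ) (hτ : τ ∈ Ioo (0:ℝ) 1) :
    Tendsto (fun δ : ℝ => fQIQ μ κ m c Feps τ (ystar μ κ m c Feps τ - δ))
      (nhdsWithin 0 (Ioi 0)) (nhds (ystar μ κ m c Feps τ)) := by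
  classical
  have hsg : ∀ h₂, sgn (c h₂) * c h₂ = |c h₂| := fun h₂ => by
    rw [sgn]; split_ifs with h
    · rw [one_mul, abs_of_nonneg h]
    · rw [neg_one_mul, abs_of_neg (lt_of_not_ge h)]
  have hprPi : ∀ (π₁ : X1 → ℝ) (y : ℝ),
      prPi μ κ m c Feps π₁ (fun h₂ => sgn (c h₂)) y
        = ∫ h₁, Stmt10Aux.J κ m c Feps h₁ (π₁ h₁) y ∂μ := by
    intro π₁ y
    simp only [prPi, Stmt10Aux.J, hsg]
  set g : ℝ → ℝ := Stmt10Aux.gmin κ m c Feps μ with hgdef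
  set P : ℝ → ℝ → ℝ := Stmt10Aux.Pfun κ m c Feps μ with hPdef
  have hPself : ∀ y, P y y = g y := fun y =>
    Stmt10Aux.Pfun_self κ μ hm hc hF_mono hF_mem y
  have hgleP : ∀ y z, g z ≤ P y z := fun y z =>
    Stmt10Aux.gmin_le_Pfun κ μ hm hc hF_mono hF_mem y z
  have hPmono : ∀ y, Monotone (P y) := fun y =>
    Stmt10Aux.Pfun_mono κ μ hm hc hF_mono hF_mem y
  have hgmono : Monotone g := Stmt10Aux.gmin_mono κ μ hm hc hF_mono hF_mem
  set S : Set ℝ := {y : ℝ | τ ≤ g y} with hSdef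
  have hy0S : ystar μ κ m c Feps τ = sInf S := by
    rw [ystar]
    congr 1
    ext y
    simp only [hSdef, mem_setOf_eq, hprPi, ← hPself y]
    rfl
  set y0 : ℝ := ystar μ κ m c Feps τ with hy0
  have hSne : S.Nonempty := by
    obtain ⟨y, hy⟩ :=
      ((Stmt10Aux.gmin_tendsto_atTop κ μ hm hc hF_mono hF_mem hF_top).eventually
        (eventually_gt_nhds hτ.2)).exists
    exact ⟨y, le_of_lt hy⟩
  have hSbdd : BddBelow S := by
    obtain ⟨B, hB⟩ := eventually_atBot.1
      ((Stmt10Aux.gmin_tendsto_atBot κ μ hm hc hF_mono hF_mem hF_bot).eventually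
        (eventually_lt_nhds hτ.1))
    exact ⟨B, fun y hy => le_of_not_gt fun hlt =>
      absurd hy (not_le.2 (hB y hlt.le))⟩
  have hgy0 : τ ≤ g y0 := by
    have htd : Tendsto g (nhdsWithin y0 (Ioi y0)) (nhds (g y0)) :=
      (Stmt10Aux.gmin_tendsto_within κ μ hm hc hF_mono hF_mem hF_rc y0).mono_left
        (nhdsWithin_mono _ Ioi_subset_Ici_self)
    refine ge_of_tendsto htd (eventually_nhdsWithin_of_forall fun y hy => ?_)
    have hlt : sInf S < y := by rw [← hy0S]; exact hy
    obtain ⟨s, hsS, hsy⟩ := exists_lt_of_csInf_lt hSne hlt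
    exact le_trans hsS (hgmono hsy.le)
  have key : ∀ δ : ℝ, 0 < δ →
      y0 - δ ≤ fQIQ μ κ m c Feps τ (y0 - δ) ∧ fQIQ μ κ m c Feps τ (y0 - δ) ≤ y0 := by
    intro δ hδ
    set y : ℝ := y0 - δ with hy
    have hylt : y < y0 := by rw [hy]; linarith
    have hgy : g y < τ := by
      by_contra h
      push_neg at h
      have h1 : sInf S ≤ y := csInf_le hSbdd h
      rw [← hy0S] at h1
      linarith
    have hfq : fQIQ μ κ m c Feps τ y = sInf {z : ℝ | τ ≤ P y z} := by
      rw [fQIQ, quant]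
      congr 1
      ext z
      simp only [mem_setOf_eq, hprPi]
      rfl
    have hy0T : y0 ∈ {z : ℝ | τ ≤ P y z} := le_trans hgy0 (hgleP y y0)
    have hTlb : ∀ z ∈ {z : ℝ | τ ≤ P y z}, y ≤ z := by
      intro z hz
      by_contra h
      push_neg at h
      have h1 : P y z ≤ P y y := hPmono y h.le
      rw [hPself y] at h1
      exact absurd hz (not_le.2 (lt_of_le_of_lt h1 hgy))
    rw [hfq]
    exact ⟨le_csInf ⟨y0, hy0T⟩ hTlb, csInf_le ⟨y, hTlb⟩ hy0T⟩
  refine tendsto_of_tendsto_of_tendsto_of_le_of_le'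
    (g := fun δ : ℝ => y0 - δ) (h := fun _ : ℝ => y0) ?_ tendsto_const_nhds ?_ ?_
  · have h1 : Tendsto (fun δ : ℝ => y0 - δ) (nhds 0) (nhds (y0 - 0)) :=
      (continuous_const.sub continuous_id).tendsto 0
    simpa using h1.mono_left nhdsWithin_le_nhds
  · exact eventually_nhdsWithin_of_forall fun δ hδ => (key δ hδ).1
  · exact eventually_nhdsWithin_of_forall fun δ hδ => (key δ hδ).2
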